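/- If Γ_E(R) has at least three vertices, then Γ_E(R) is not a complete graph. -/

import Mathlib

open scoped Classical

noncomputable section

/-- The annihilator ideal of an element `x` of a commutative ring `R`. -/
def ann (R : Type*) [CommRing R] (x : R) : Ideal R := Ideal.torsionOf R R x

/-- The type of nonzero zero divisors of `R`. -/
def ZD (R : Type*) [CommRing R] : Type _ :=
  {x : R // x ≠ 0 ∧ ∃ y : R, y ≠ 0 ∧ x * y = 0}

/-- Two zero divisors are equivalent iff they have the same annihilator. -/
instance annSetoid (R : Type*) [CommRing R] : Setoid (ZD R) :=
  ⟨fun a b => ann R a.1 = ann R b.1,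
   fun _ => rfl, Eq.symm, Eq.trans⟩

/-- The vertex set of `Γ_E(R)`: equivalence classes of nonzero zero divisors. -/
def GammaEV (R : Type*) [CommRing R] : Type _ := Quotient (annSetoid R)

/-- The class of a nonzero zero divisor. -/
def cls (R : Type*) [CommRing R] (a : ZD R) : GammaEV R :=
  Quotient.mk (annSetoid R) a

/-- The graph `Γ_E(R)` of equivalence classes of zero divisors. -/
def gammaE (R : Type*) [CommRing R] : SimpleGraph (GammaEV R) where
  Adj u v := u ≠ v ∧ ∃ a b : ZD R, cls R a = u ∧ cls R b = v ∧ a.1 * b.1 = 0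
  symm := by
    constructor
    rintro u v ⟨huv, a, b, ha, hb, hab⟩
    exact ⟨huv.symm, b, a, hb, ha, by rwa [mul_comm] at hab⟩
  loopless := by constructor; rintro u ⟨h, -⟩; exact h rfl

/-- `I` is a maximal element of the family `F = {ann x : 0 ≠ x ∈ R}`. -/
def MaxAnn (R : Type*) [CommRing R] (I : Ideal R) : Prop :=
  (∃ x : R, x ≠ 0 ∧ I = ann R x) ∧
    ∀ y : R, y ≠ 0 → I ≤ ann R y → I = ann R y

lemma mem_ann {R : Type*} [CommRing R] {a x : R} : a ∈ ann R x ↔ a * x = 0 := by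
  simp [ann, Ideal.mem_torsionOf_iff, smul_eq_mul]

lemma cls_eq_iff {R : Type*} [CommRing R] {a b : ZD R} :
    cls R a = cls R b ↔ ann R a.1 = ann R b.1 := by
  constructor
  · intro h; exact Quotient.exact h
  · intro h; exact Quotient.sound h

/-- adjacency of classes implies the product of *any* representatives is zero. -/
lemma mul_eq_zero_of_ne {R : Type*} [CommRing R]
    (h : ∀ u v : GammaEV R, u ≠ v → (gammaE R).Adj u v)
    {a b : ZD R} (hne : cls R a ≠ cls R b) : a.1 * b.1 = 0 := by
  obtain ⟨-, p, q, hp, hq, hpq⟩ := h _ _ hne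
  have h1 : q.1 ∈ ann R p.1 := mem_ann.2 (by rwa [mul_comm] at hpq)
  rw [cls_eq_iff.1 (hp.trans (cls_eq_iff.2 rfl).symm)] at h1
  -- h1 : q.1 ∈ ann R a.1  (since ann p = ann a)
  have h2 : a.1 * q.1 = 0 := by
    have := mem_ann.1 h1; rwa [mul_comm] at this
  have h3 : a.1 ∈ ann R q.1 := mem_ann.2 h2
  rw [cls_eq_iff.1 (hq.trans (cls_eq_iff.2 rfl).symm)] at h3
  exact mem_ann.1 h3

lemma ann_neg {R : Type*} [CommRing R] (x : R) : ann R (-x) = ann R x := by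
  ext a; simp [mem_ann]

/-- Given three pairwise distinct classes, one of the first two reps squares to zero. -/
lemma sq_zero {R : Type*} [CommRing R]
    (h : ∀ u v : GammaEV R, u ≠ v → (gammaE R).Adj u v)
    {x y z : ZD R} (hxy : cls R x ≠ cls R y) (hxz : cls R x ≠ cls R z)
    (hyz : cls R y ≠ cls R z) :
    x.1 * x.1 = 0 ∨ y.1 * y.1 = 0 := by
  have hxy0 : x.1 * y.1 = 0 := mul_eq_zero_of_ne h hxy
  have hxz0 : x.1 * z.1 = 0 := mul_eq_zero_of_ne h hxz
  have hyz0 : y.1 * z.1 = 0 := mul_eq_zero_of_ne h hyz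
  have hs0 : x.1 + y.1 ≠ 0 := by
    intro h0
    apply hxy
    rw [cls_eq_iff]
    have : x.1 = -y.1 := by linear_combination h0
    rw [this, ann_neg]
  have hsz : (x.1 + y.1) * z.1 = 0 := by rw [add_mul, hxz0, hyz0, add_zero]
  set s : ZD R := ⟨x.1 + y.1, hs0, z.1, z.2.1, hsz⟩ with hs
  by_cases hsx : cls R s = cls R x
  · -- then cls s ≠ cls y
    right
    have hsy : cls R s ≠ cls R y := hsx ▸ hxy
    have := mul_eq_zero_of_ne h hsy
    have : (x.1 + y.1) * y.1 = 0 := this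
    rw [add_mul, hxy0, zero_add] at this
    exact this
  · left
    have := mul_eq_zero_of_ne h hsx
    have : (x.1 + y.1) * x.1 = 0 := this
    rw [add_mul, mul_comm y.1 x.1, hxy0, add_zero] at this
    exact this

/-- Two distinct square-zero classes in a complete graph give a contradiction. -/
lemma final {R : Type*} [CommRing R]
    (h : ∀ u v : GammaEV R, u ≠ v → (gammaE R).Adj u v)
    {u v : ZD R} (huv : cls R u ≠ cls R v)
    (hu : u.1 * u.1 = 0) (hv : v.1 * v.1 = 0) : False := by
  have key : ∀ (w : ZD R) (t : ZD R), t.1 * t.1 = 0 → w.1 * t.1 = 0 := by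
    intro w t ht
    by_cases hwt : cls R w = cls R t
    · have := cls_eq_iff.1 hwt
      have : t.1 ∈ ann R w.1 := by rw [this]; exact mem_ann.2 ht
      have := mem_ann.1 this
      rwa [mul_comm] at this
    · exact mul_eq_zero_of_ne h hwt
  apply huv
  rw [cls_eq_iff]
  ext a
  simp only [mem_ann]
  constructor
  · intro hau
    by_cases ha : a = 0
    · simp [ha]
    · exact key ⟨a, ha, u.1, u.2.1, hau⟩ v hv
  · intro hav
    by_cases ha : a = 0
    · simp [ha]
    · exact key ⟨a, ha, v.1, v.2.1, hav⟩ u hu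

theorem stmt4 (R : Type*) [CommRing R] [IsNoetherianRing R]
    (hcard : 3 ≤ (Set.univ : Set (GammaEV R)).encard) :
    ¬ ∀ u v : GammaEV R, u ≠ v → (gammaE R).Adj u v := by
  intro h
  -- extract three distinct vertices
  obtain ⟨a, b, -, -, hab⟩ := Set.one_lt_encard_iff.1 (lt_of_lt_of_le (by norm_num) hcard)
  have hne : ((Set.univ : Set (GammaEV R)) \ {a, b}).Nonempty := by
    by_contra hemp
    rw [Set.not_nonempty_iff_eq_empty, Set.diff_eq_empty] at hemp
    have := (Set.encard_mono hemp).trans_eq (Set.encard_pair hab)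
    have := hcard.trans this
    norm_num at this
  obtain ⟨c, -, hc⟩ := hne
  simp only [Set.mem_insert_iff, Set.mem_singleton_iff, not_or] at hc
  obtain ⟨hca, hcb⟩ := hc
  obtain ⟨x, rfl⟩ := Quotient.exists_rep a
  obtain ⟨y, rfl⟩ := Quotient.exists_rep b
  obtain ⟨z, rfl⟩ := Quotient.exists_rep c
  have hxy : cls R x ≠ cls R y := hab
  have hxz : cls R x ≠ cls R z := fun e => hca e.symm
  have hyz : cls R y ≠ cls R z := fun e => hcb e.symm
  rcases sq_zero h hxy hxz hyz with h1 | h1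
  · rcases sq_zero h hyz (fun e => hxy e.symm) (fun e => hxz e.symm) with h2 | h2
    · exact final h hxy h1 h2
    · exact final h hxz h1 h2
  · rcases sq_zero h hxz hxy (fun e => hyz e.symm) with h2 | h2
    · exact final h hxy h2 h1
    · exact final h hyz h1 h2
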